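/- Let n be even, Γ = (Γ₁,…,Γₙ) ∈ (S²)ⁿ with cyclic indices, W(Γ) = min_i arccos(Γᵢᵀ Γᵢ₊₁), and M_e the antipodal formation manifold {Γ : ∃ v ∈ S², Γᵢ = (−1)^{i−1} v}. Then d_{M_e}(Γ) ≤ (n/2)(π − W(Γ)), where d_{M_e}(Γ) = inf_{Γ̄ ∈ M_e} max_i arccos(Γᵢᵀ Γ̄ᵢ). -/
import Mathlib


open Matrix Real

noncomputable section

/-- The hat (cross-product) matrix of `k`, satisfying `hat k *ᵥ y = k ×₃ y`. -/
def hat (k : Fin 3 → ℝ) : Matrix (Fin 3) (Fin 3) ℝ :=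
  !![0, -k 2, k 1; k 2, 0, -k 0; -k 1, k 0, 0]

/-- Membership in the unit 2-sphere. -/
def S2 (x : Fin 3 → ℝ) : Prop := x ⬝ᵥ x = 1

/-- Geodesic distance on the unit sphere. -/
def geo (x y : Fin 3 → ℝ) : ℝ := Real.arccos (x ⬝ᵥ y)

lemma arccos_anti {x y : ℝ} (hxy : x ≤ y) : Real.arccos y ≤ Real.arccos x := by
  rw [Real.arccos_eq_pi_div_two_sub_arcsin, Real.arccos_eq_pi_div_two_sub_arcsin]
  have := Real.monotone_arcsin hxy
  linarith

lemma cs (u w : Fin 3 → ℝ) : (u ⬝ᵥ w) ^ 2 ≤ (u ⬝ᵥ u) * (w ⬝ᵥ w) := by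
  have h := Finset.sum_mul_sq_le_sq_mul_sq Finset.univ u w
  simpa [dotProduct, sq] using h

lemma geo_triangle {x y z : Fin 3 → ℝ} (hx : S2 x) (hy : S2 y) (hz : S2 z) :
    geo x z ≤ geo x y + geo y z := by
  unfold S2 at hx hy hz
  set c1 := x ⬝ᵥ y with hc1
  set c2 := y ⬝ᵥ z with hc2
  set c3 := x ⬝ᵥ z with hc3
  have hxy : c1 ^ 2 ≤ 1 := by have := cs x y; rw [hx, hy, mul_one] at this; exact this
  have hyz : c2 ^ 2 ≤ 1 := by have := cs y z; rw [hy, hz, mul_one] at this; exact this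
  have hkey : (c3 - c1 * c2) ^ 2 ≤ (1 - c1 ^ 2) * (1 - c2 ^ 2) := by
    have h := cs (x - c1 • y) (z - c2 • y)
    have hyx : y ⬝ᵥ x = c1 := by rw [dotProduct_comm]
    have hzy : z ⬝ᵥ y = c2 := by rw [dotProduct_comm]
    have hyz' : y ⬝ᵥ z = c2 := rfl
    simp only [sub_dotProduct, dotProduct_sub, smul_dotProduct, dotProduct_smul,
      smul_eq_mul, hx, hy, hz, hyx, hzy, hyz'] at h
    nlinarith [h]
  by_cases hab : Real.arccos c1 + Real.arccos c2 ≤ π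
  · have hb1 : -1 ≤ c1 := by nlinarith
    have hb2 : c1 ≤ 1 := by nlinarith
    have hb3 : -1 ≤ c2 := by nlinarith
    have hb4 : c2 ≤ 1 := by nlinarith
    have hs1 : Real.sqrt (1 - c1 ^ 2) ^ 2 = 1 - c1 ^ 2 := Real.sq_sqrt (by nlinarith)
    have hs2 : Real.sqrt (1 - c2 ^ 2) ^ 2 = 1 - c2 ^ 2 := Real.sq_sqrt (by nlinarith)
    have hcos : Real.cos (Real.arccos c1 + Real.arccos c2) =
        c1 * c2 - Real.sqrt (1 - c1 ^ 2) * Real.sqrt (1 - c2 ^ 2) := by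
      rw [Real.cos_add, Real.cos_arccos hb1 hb2, Real.cos_arccos hb3 hb4,
        Real.sin_arccos, Real.sin_arccos]
    have hle : Real.cos (Real.arccos c1 + Real.arccos c2) ≤ c3 := by
      rw [hcos]
      have hs0 : 0 ≤ Real.sqrt (1 - c1 ^ 2) * Real.sqrt (1 - c2 ^ 2) :=
        mul_nonneg (Real.sqrt_nonneg _) (Real.sqrt_nonneg _)
      have habs : |c3 - c1 * c2| ≤ Real.sqrt (1 - c1 ^ 2) * Real.sqrt (1 - c2 ^ 2) := by
        rw [← Real.sqrt_sq_eq_abs, ← Real.sqrt_sq hs0]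
        exact Real.sqrt_le_sqrt (by rw [mul_pow, hs1, hs2]; exact hkey)
      have h2 := (abs_le.mp habs).1
      linarith
    calc geo x z = Real.arccos c3 := rfl
      _ ≤ Real.arccos (Real.cos (Real.arccos c1 + Real.arccos c2)) := arccos_anti hle
      _ = Real.arccos c1 + Real.arccos c2 :=
        Real.arccos_cos (add_nonneg (Real.arccos_nonneg _) (Real.arccos_nonneg _)) hab
  · have := Real.arccos_le_pi c3
    unfold geo
    linarith

lemma S2_neg {x : Fin 3 → ℝ} (hx : S2 x) : S2 (-x) := by
  unfold S2 at hx ⊢; simp [hx]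

lemma S2_negpow_smul {x : Fin 3 → ℝ} (hx : S2 x) (k : ℕ) : S2 (((-1 : ℝ) ^ k) • x) := by
  unfold S2 at hx ⊢
  rw [smul_dotProduct, dotProduct_smul, hx, smul_eq_mul, smul_eq_mul, mul_one, ← pow_add]
  exact Even.neg_one_pow ⟨k, rfl⟩

lemma geo_neg_neg (x y : Fin 3 → ℝ) : geo (-x) (-y) = geo x y := by
  simp [geo, neg_dotProduct, dotProduct_neg]

lemma negpow_eq (a b : ℕ) (h : Even (a + b)) : ((-1 : ℝ)) ^ a = (-1) ^ b := by
  rw [Nat.even_add] at h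
  rcases Nat.even_or_odd a with ha | ha
  · rw [ha.neg_one_pow, (h.mp ha).neg_one_pow]
  · have hb : Odd b := by
      rcases Nat.even_or_odd b with hb | hb
      · exact absurd (h.mpr hb) (Nat.not_even_iff_odd.mpr ha)
      · exact hb
    rw [ha.neg_one_pow, hb.neg_one_pow]

lemma main_aux (n m : ℕ) (W : ℝ) (Γ : ℕ → Fin 3 → ℝ) (hS : ∀ i, S2 (Γ i))
    (hm : 2 * m = n) (hWle : ∀ j < n, W ≤ geo (Γ j) (Γ (j + 1))) (hWπ : W ≤ π) :
    ∀ i < n, geo (Γ i) (((-1 : ℝ) ^ (i + m)) • Γ m) ≤ (m : ℝ) * (π - W) := by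
  have hstep : ∀ j < n, ∀ w : Fin 3 → ℝ, S2 w →
      geo (Γ (j + 1)) (-w) ≤ (π - W) + geo (Γ j) w := by
    intro j hj w hw
    have t1 : geo (Γ (j + 1)) (-w) ≤ geo (Γ (j + 1)) (-(Γ j)) + geo (-(Γ j)) (-w) :=
      geo_triangle (hS _) (S2_neg (hS _)) (S2_neg hw)
    have e1 : geo (Γ (j + 1)) (-(Γ j)) = π - geo (Γ j) (Γ (j + 1)) := by
      unfold geo; rw [dotProduct_neg, Real.arccos_neg, dotProduct_comm]
    have e2 : geo (-(Γ j)) (-w) = geo (Γ j) w := geo_neg_neg _ _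
    have := hWle j hj
    rw [e1, e2] at t1
    linarith
  have hstep' : ∀ j < n, ∀ w : Fin 3 → ℝ, S2 w →
      geo (Γ j) (-w) ≤ (π - W) + geo (Γ (j + 1)) w := by
    intro j hj w hw
    have t1 : geo (Γ j) (-w) ≤ geo (Γ j) (-(Γ (j + 1))) + geo (-(Γ (j + 1))) (-w) :=
      geo_triangle (hS _) (S2_neg (hS _)) (S2_neg hw)
    have e1 : geo (Γ j) (-(Γ (j + 1))) = π - geo (Γ j) (Γ (j + 1)) := by
      unfold geo; rw [dotProduct_neg, Real.arccos_neg]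
    have e2 : geo (-(Γ (j + 1))) (-w) = geo (Γ (j + 1)) w := geo_neg_neg _ _
    have := hWle j hj
    rw [e1, e2] at t1
    linarith
  have hsm : ∀ k : ℕ, ((-1 : ℝ)) ^ (k + 1) • Γ m = -(((-1 : ℝ)) ^ k • Γ m) := by
    intro k; rw [pow_succ, mul_neg_one, neg_smul]
  have hzero : geo (Γ m) (((-1 : ℝ)) ^ 0 • Γ m) = 0 := by
    have := hS m
    unfold S2 at this
    simp [geo, this]
  -- upward claim
  have claim_up : ∀ k : ℕ, m + k ≤ n →
      geo (Γ (m + k)) (((-1 : ℝ)) ^ k • Γ m) ≤ (k : ℝ) * (π - W) := by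
    intro k
    induction k with
    | zero => intro _; simpa using hzero.le
    | succ k ih =>
      intro hkn
      have ihk := ih (by omega)
      have hstepk := hstep (m + k) (by omega) (((-1 : ℝ)) ^ k • Γ m) (S2_negpow_smul (hS m) k)
      rw [hsm k]
      push_cast
      calc geo (Γ (m + k + 1)) (-(((-1 : ℝ)) ^ k • Γ m))
          ≤ (π - W) + geo (Γ (m + k)) (((-1 : ℝ)) ^ k • Γ m) := hstepk
        _ ≤ (π - W) + (k : ℝ) * (π - W) := by linarith
        _ = ((k : ℝ) + 1) * (π - W) := by ring
  -- downward claim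
  have claim_down : ∀ k : ℕ, k ≤ m →
      geo (Γ (m - k)) (((-1 : ℝ)) ^ k • Γ m) ≤ (k : ℝ) * (π - W) := by
    intro k
    induction k with
    | zero => intro _; simpa using hzero.le
    | succ k ih =>
      intro hkm
      have ihk := ih (by omega)
      set j := m - (k + 1) with hj
      have hj1 : j + 1 = m - k := by omega
      have hjn : j < n := by omega
      have hstepj := hstep' j hjn (((-1 : ℝ)) ^ k • Γ m) (S2_negpow_smul (hS m) k)
      rw [hj1] at hstepj
      rw [hsm k]
      push_cast
      calc geo (Γ j) (-(((-1 : ℝ)) ^ k • Γ m))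
          ≤ (π - W) + geo (Γ (m - k)) (((-1 : ℝ)) ^ k • Γ m) := hstepj
        _ ≤ (π - W) + (k : ℝ) * (π - W) := by linarith
        _ = ((k : ℝ) + 1) * (π - W) := by ring
  intro i hi
  have hπW : 0 ≤ π - W := by linarith
  rcases le_total i m with h | h
  · have hk := claim_down (m - i) (by omega)
    have hmi : m - (m - i) = i := by omega
    rw [hmi] at hk
    have hpw : ((-1 : ℝ)) ^ (i + m) = (-1) ^ (m - i) := negpow_eq _ _ ⟨m, by omega⟩
    rw [hpw]
    calc geo (Γ i) (((-1 : ℝ)) ^ (m - i) • Γ m) ≤ ((m - i : ℕ) : ℝ) * (π - W) := hk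
      _ ≤ (m : ℝ) * (π - W) := by
          apply mul_le_mul_of_nonneg_right _ hπW
          exact_mod_cast Nat.sub_le m i
  · have hk := claim_up (i - m) (by omega)
    have hmi : m + (i - m) = i := by omega
    rw [hmi] at hk
    have hpw : ((-1 : ℝ)) ^ (i + m) = (-1) ^ (i - m) := negpow_eq _ _ ⟨i, by omega⟩
    rw [hpw]
    calc geo (Γ i) (((-1 : ℝ)) ^ (i - m) • Γ m) ≤ ((i - m : ℕ) : ℝ) * (π - W) := hk
      _ ≤ (m : ℝ) * (π - W) := by
          apply mul_le_mul_of_nonneg_right _ hπW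
          exact_mod_cast (by omega : i - m ≤ m)

theorem stmt_9 (n : ℕ) (hn : 0 < n) (hne : Even n) (Γ : ℕ → Fin 3 → ℝ)
    (hS : ∀ i, S2 (Γ i)) (hper : Γ n = Γ 0) :
    sInf {d : ℝ | ∃ v : Fin 3 → ℝ, S2 v ∧
        d = (Finset.range n).sup' (Finset.nonempty_range_iff.mpr (by omega))
          (fun i => geo (Γ i) (((-1 : ℝ) ^ i) • v))} ≤
      ((n : ℝ) / 2) *
        (π - (Finset.range n).inf' (Finset.nonempty_range_iff.mpr (by omega))
          (fun i => geo (Γ i) (Γ (i + 1)))) := by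
  set m := n / 2 with hmdef
  have hm : 2 * m = n := (Nat.two_mul_div_two_of_even hne)
  set v : Fin 3 → ℝ := ((-1 : ℝ)) ^ m • Γ m with hv
  have hvS : S2 v := S2_negpow_smul (hS m) m
  set W : ℝ := (Finset.range n).inf' (Finset.nonempty_range_iff.mpr (by omega))
      (fun i => geo (Γ i) (Γ (i + 1))) with hW
  have hWle : ∀ j < n, W ≤ geo (Γ j) (Γ (j + 1)) := fun j hj =>
    Finset.inf'_le _ (Finset.mem_range.mpr hj)
  have hWπ : W ≤ π := le_trans (hWle 0 hn) (Real.arccos_le_pi _)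
  have hmem : (Finset.range n).sup' (Finset.nonempty_range_iff.mpr (by omega))
      (fun i => geo (Γ i) (((-1 : ℝ) ^ i) • v)) ∈
      {d : ℝ | ∃ v : Fin 3 → ℝ, S2 v ∧
        d = (Finset.range n).sup' (Finset.nonempty_range_iff.mpr (by omega))
          (fun i => geo (Γ i) (((-1 : ℝ) ^ i) • v))} := ⟨v, hvS, rfl⟩
  have hbdd : BddBelow {d : ℝ | ∃ v : Fin 3 → ℝ, S2 v ∧
        d = (Finset.range n).sup' (Finset.nonempty_range_iff.mpr (by omega))
          (fun i => geo (Γ i) (((-1 : ℝ) ^ i) • v))} := by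
    refine ⟨0, ?_⟩
    rintro d ⟨w, hw, rfl⟩
    have h0 : (0 : ℝ) ≤ geo (Γ 0) (((-1 : ℝ) ^ 0) • w) := Real.arccos_nonneg _
    exact le_trans h0 (Finset.le_sup' (fun i => geo (Γ i) (((-1 : ℝ) ^ i) • w)) (Finset.mem_range.mpr hn))
  refine le_trans (csInf_le hbdd hmem) ?_
  have hn2 : ((n : ℝ) / 2) = (m : ℝ) := by
    rw [← hm]; push_cast; ring
  rw [hn2]
  apply Finset.sup'_le
  intro i hi
  rw [Finset.mem_range] at hi
  have := main_aux n m W Γ hS hm hWle hWπ i hi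
  have hsm : ((-1 : ℝ) ^ i) • v = ((-1 : ℝ)) ^ (i + m) • Γ m := by
    rw [hv, smul_smul, ← pow_add]
  rw [hsm]
  exact this
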